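/- Let R be an m×m complex matrix, S an n×n upper triangular complex matrix (S k i = 0 whenever k > i), and D an m×n complex matrix. Then an m×n complex matrix Y satisfies the Sylvester equation R*Y + Y*S = D if and only if for every column index i, (R + S i i • 1) *ᵥ yᵢ = dᵢ − Σ_{k < i} S k i • y_k, where yᵢ and dᵢ denote the i-th columns of Y and D, respectively. -/
import Mathlib


open Matrix

theorem stmt_11 {m n : ℕ} (R : Matrix (Fin m) (Fin m) ℂ) (S : Matrix (Fin n) (Fin n) ℂ)
    (hS : ∀ k i : Fin n, i < k → S k i = 0) (D Y : Matrix (Fin m) (Fin n) ℂ) :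
    R * Y + Y * S = D ↔
      ∀ i : Fin n,
        (R + S i i • (1 : Matrix (Fin m) (Fin m) ℂ)) *ᵥ (fun j => Y j i) =
          (fun j => D j i) - ∑ k ∈ Finset.Iio i, S k i • (fun j => Y j k) := by
  have key : ∀ (i : Fin n) (j : Fin m),
      (Y * S) j i = S i i * Y j i + ∑ k ∈ Finset.Iio i, S k i * Y j k := by
    intro i j
    rw [Matrix.mul_apply,
      ← Finset.sum_subset (Finset.subset_univ (Finset.Iic i))
        (fun k _ hk => by rw [hS k i (by simpa using hk), mul_zero]),
      ← Finset.Iio_insert, Finset.sum_insert (by simp), mul_comm]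
    congr 1
    exact Finset.sum_congr rfl fun k _ => mul_comm _ _
  have entry : ∀ (i : Fin n) (j : Fin m),
      ((R + S i i • (1 : Matrix (Fin m) (Fin m) ℂ)) *ᵥ (fun j => Y j i)) j =
        (R * Y) j i + S i i * Y j i := by
    intro i j
    simp only [mulVec, dotProduct, Matrix.add_apply, Matrix.smul_apply, Matrix.one_apply,
      smul_eq_mul, Matrix.mul_apply, add_mul, mul_ite, mul_zero, Finset.sum_add_distrib]
    simp [ite_mul, Finset.sum_ite_eq, mul_comm]
  constructor
  · intro h i
    funext j
    have h' := congrFun (congrFun h j) i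
    rw [Matrix.add_apply, key i j] at h'
    rw [entry i j]
    simp only [Pi.sub_apply, Finset.sum_apply, Pi.smul_apply, smul_eq_mul]
    linear_combination h'
  · intro h
    funext j i
    have h' := congrFun (h i) j
    rw [entry i j] at h'
    rw [Matrix.add_apply, key i j]
    simp only [Pi.sub_apply, Finset.sum_apply, Pi.smul_apply, smul_eq_mul] at h'
    linear_combination h'
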